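/- For any graph G on n vertices, the fractional matching number satisfies α*'(G) = (1/2)(n - max_{S ⊆ V(G)} (i(G-S) - |S|)), where i(G-S) denotes the number of isolated vertices of the graph obtained by deleting S. -/

import Mathlib

open SimpleGraph Finset

/-- The signless Laplacian matrix `Q(G) = D(G) + A(G)` of a graph. -/
noncomputable def signlessLap {V : Type*} [Fintype V] [DecidableEq V]
    (G : SimpleGraph V) [DecidableRel G.Adj] : Matrix V V ℝ :=
  Matrix.diagonal (fun v => (G.degree v : ℝ)) + G.adjMatrix ℝ

/-- The signless Laplacian spectral radius: the largest eigenvalue of `Q(G)`. -/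
noncomputable def q1 {V : Type*} [Fintype V] [DecidableEq V]
    (G : SimpleGraph V) [DecidableRel G.Adj] : ℝ :=
  sSup (spectrum ℝ (signlessLap G))

/-- `f` is a fractional matching of `G`: it assigns each edge a weight in `[0,1]`
(and `0` to non-edges), with total weight at most `1` at each vertex. -/
def IsFracMatching {V : Type*} [Fintype V] [DecidableEq V]
    (G : SimpleGraph V) [DecidableRel G.Adj] (f : Sym2 V → ℝ) : Prop :=
  (∀ e ∈ G.edgeFinset, 0 ≤ f e ∧ f e ≤ 1) ∧
  (∀ e, e ∉ G.edgeFinset → f e = 0) ∧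
  (∀ v : V, ∑ e ∈ G.incidenceFinset v, f e ≤ 1)

/-- The fractional matching number of `G`. -/
noncomputable def fracMatchNum {V : Type*} [Fintype V] [DecidableEq V]
    (G : SimpleGraph V) [DecidableRel G.Adj] : ℝ :=
  sSup {x : ℝ | ∃ f, IsFracMatching G f ∧ x = ∑ e ∈ G.edgeFinset, f e}

/-- `G` has a fractional perfect matching: a fractional matching of total weight `n/2`. -/
def HasFracPerfectMatching {V : Type*} [Fintype V] [DecidableEq V]
    (G : SimpleGraph V) [DecidableRel G.Adj] : Prop :=
  ∃ f, IsFracMatching G f ∧ ∑ e ∈ G.edgeFinset, f e = (Fintype.card V : ℝ) / 2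

/-- Number of isolated vertices of `G - S`. -/
def isoCount {V : Type*} [Fintype V] [DecidableEq V]
    (G : SimpleGraph V) [DecidableRel G.Adj] (S : Finset V) : ℕ :=
  (Finset.univ.filter (fun v => v ∉ S ∧ ∀ u, G.Adj v u → u ∈ S)).card

section Aux

variable {V : Type*} [Fintype V] [DecidableEq V] (G : SimpleGraph V) [DecidableRel G.Adj]

private lemma sum_incidence_eq (f : Sym2 V → ℝ) (T : Finset V) :
    ∑ v ∈ T, ∑ e ∈ G.incidenceFinset v, f e
      = ∑ e ∈ G.edgeFinset, (#(T.filter (· ∈ e)) : ℝ) * f e := by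
  simp_rw [incidenceFinset_eq_filter, Finset.sum_filter]
  rw [Finset.sum_comm]
  refine Finset.sum_congr rfl fun e _ => ?_
  rw [← Finset.sum_filter, Finset.sum_const, nsmul_eq_mul]

private lemma card_filter_mem_edge {e : Sym2 V} (he : e ∈ G.edgeFinset) :
    #(Finset.univ.filter (· ∈ e)) = 2 := by
  rw [mem_edgeFinset] at he
  induction e with
  | _ a b =>
    have hab : a ≠ b := (G.ne_of_adj he)
    have : Finset.univ.filter (· ∈ s(a, b)) = {a, b} := by
      ext x; simp [Sym2.mem_iff]
    rw [this, Finset.card_insert_of_notMem (by simp [hab]), Finset.card_singleton]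

private lemma frac_le {f : Sym2 V → ℝ} (hf : IsFracMatching G f) (S : Finset V) :
    2 * ∑ e ∈ G.edgeFinset, f e
      ≤ (Fintype.card V : ℝ) - isoCount G S + S.card := by
  obtain ⟨hf1, hf2, hf3⟩ := hf
  set I := Finset.univ.filter (fun v => v ∉ S ∧ ∀ u, G.Adj v u → u ∈ S) with hIdef
  have htot : ∑ v, ∑ e ∈ G.incidenceFinset v, f e = 2 * ∑ e ∈ G.edgeFinset, f e := by
    rw [sum_incidence_eq, Finset.mul_sum]
    refine Finset.sum_congr rfl fun e he => ?_
    rw [card_filter_mem_edge G he]; norm_num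
  have hIS : ∑ v ∈ I, ∑ e ∈ G.incidenceFinset v, f e
      ≤ ∑ v ∈ S, ∑ e ∈ G.incidenceFinset v, f e := by
    rw [sum_incidence_eq, sum_incidence_eq]
    refine Finset.sum_le_sum fun e he => ?_
    refine mul_le_mul_of_nonneg_right ?_ (hf1 e he).1
    rw [Nat.cast_le]
    rw [mem_edgeFinset] at he
    induction e with
    | _ a b =>
      have hadj : G.Adj a b := he
      by_cases ha : a ∈ I
      · simp only [hIdef, Finset.mem_filter] at ha
        have hbS : b ∈ S := ha.2.2 b hadj
        have hbI : b ∉ I := by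
          simp only [hIdef, Finset.mem_filter]
          intro h; exact h.2.1 hbS
        have h1 : I.filter (· ∈ s(a,b)) ⊆ {a} := by
          intro x hx
          simp only [Finset.mem_filter, Sym2.mem_iff] at hx
          rcases hx.2 with rfl | rfl
          · exact Finset.mem_singleton_self _
          · exact absurd hx.1 hbI
        have h2 : b ∈ S.filter (· ∈ s(a,b)) := by
          simp [hbS]
        calc #(I.filter (· ∈ s(a,b))) ≤ 1 := by
              simpa using Finset.card_le_card h1
          _ ≤ #(S.filter (· ∈ s(a,b))) := Finset.card_pos.mpr ⟨b, h2⟩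
      · by_cases hb : b ∈ I
        · simp only [hIdef, Finset.mem_filter] at hb
          have haS : a ∈ S := hb.2.2 a hadj.symm
          have h1 : I.filter (· ∈ s(a,b)) ⊆ {b} := by
            intro x hx
            simp only [Finset.mem_filter, Sym2.mem_iff] at hx
            rcases hx.2 with rfl | rfl
            · exact absurd hx.1 ha
            · exact Finset.mem_singleton_self _
          have h2 : a ∈ S.filter (· ∈ s(a,b)) := by simp [haS]
          calc #(I.filter (· ∈ s(a,b))) ≤ 1 := by
                simpa using Finset.card_le_card h1
            _ ≤ #(S.filter (· ∈ s(a,b))) := Finset.card_pos.mpr ⟨a, h2⟩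
        · have h1 : I.filter (fun x => x = a ∨ x = b) = ∅ := by
            refine Finset.filter_eq_empty_iff.mpr fun x hx hm' => ?_
            rcases hm' with rfl | rfl
            exacts [ha hx, hb hx]
          simp only [Sym2.mem_iff]
          rw [h1]
          simp
  have hS1 : ∑ v ∈ S, ∑ e ∈ G.incidenceFinset v, f e ≤ (S.card : ℝ) := by
    calc ∑ v ∈ S, ∑ e ∈ G.incidenceFinset v, f e ≤ ∑ _v ∈ S, (1:ℝ) :=
          Finset.sum_le_sum fun v _ => hf3 v
      _ = S.card := by simp
  have hCo : ∑ v ∈ Finset.univ \ I, ∑ e ∈ G.incidenceFinset v, f e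
      ≤ (Fintype.card V : ℝ) - #I := by
    calc ∑ v ∈ Finset.univ \ I, ∑ e ∈ G.incidenceFinset v, f e
        ≤ ∑ _v ∈ Finset.univ \ I, (1:ℝ) := Finset.sum_le_sum fun v _ => hf3 v
      _ = ((Finset.univ \ I).card : ℝ) := by simp
      _ = (Fintype.card V : ℝ) - #I := by
          rw [Finset.card_sdiff_of_subset (Finset.subset_univ I), Finset.card_univ,
            Nat.cast_sub (Finset.card_le_univ I)]
  have hsplit : ∑ v, ∑ e ∈ G.incidenceFinset v, f e
      = ∑ v ∈ I, ∑ e ∈ G.incidenceFinset v, f e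
        + ∑ v ∈ Finset.univ \ I, ∑ e ∈ G.incidenceFinset v, f e := by
    rw [← Finset.sum_sdiff (Finset.subset_univ I)]; ring
  have : (isoCount G S : ℝ) = (#I : ℝ) := by rw [isoCount]
  rw [← htot, hsplit, this]
  linarith

/-- Key pointwise defect bound: `|X| - |N(X)| ≤ i(G - S) - |S|` for `S = N(X) \ X`. -/
private lemma defect_le (X : Finset V) :
    (#X : ℤ) - #(X.biUnion (fun v => G.neighborFinset v))
      ≤ (isoCount G ((X.biUnion (fun v => G.neighborFinset v)) \ X) : ℤ)
        - #((X.biUnion (fun v => G.neighborFinset v)) \ X) := by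
  set B := X.biUnion (fun v => G.neighborFinset v) with hB
  set S := B \ X with hS
  have hXB : X \ B ⊆ Finset.univ.filter (fun v => v ∉ S ∧ ∀ u, G.Adj v u → u ∈ S) := by
    intro v hv
    rw [Finset.mem_sdiff] at hv
    obtain ⟨hvX, hvB⟩ := hv
    simp only [Finset.mem_filter, Finset.mem_univ, true_and]
    constructor
    · rw [hS, Finset.mem_sdiff]; rintro ⟨h, -⟩; exact hvB h
    · intro u hu
      have huB : u ∈ B := Finset.mem_biUnion.mpr ⟨v, hvX, (G.mem_neighborFinset v u).mpr hu⟩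
      have huX : u ∉ X := fun h => hvB (Finset.mem_biUnion.mpr
        ⟨u, h, (G.mem_neighborFinset u v).mpr hu.symm⟩)
      rw [hS, Finset.mem_sdiff]; exact ⟨huB, huX⟩
  have h1 : #(X \ B) ≤ isoCount G S := Finset.card_le_card hXB
  have h2 : #(X \ B) + #(X ∩ B) = #X := Finset.card_sdiff_add_card_inter X B
  have h3 : #(B \ X) + #(B ∩ X) = #B := Finset.card_sdiff_add_card_inter B X
  have h4 : #(X ∩ B) = #(B ∩ X) := by rw [Finset.inter_comm]
  rw [← hS] at *
  omega

/-- The Hall-type injection into `V ⊕ Fin d`. -/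
private lemma exists_injection (d : ℕ)
    (hd : ∀ X : Finset V, (#X : ℤ) - #(X.biUnion (fun v => G.neighborFinset v)) ≤ (d : ℤ)) :
    ∃ g : V → V ⊕ Fin d, Function.Injective g ∧
      ∀ v, g v ∈ (G.neighborFinset v).image Sum.inl ∪
        (Finset.univ : Finset (Fin d)).image Sum.inr := by
  set t : V → Finset (V ⊕ Fin d) := fun v =>
    (G.neighborFinset v).image Sum.inl ∪ (Finset.univ : Finset (Fin d)).image Sum.inr with ht
  refine (Finset.all_card_le_biUnion_card_iff_exists_injective t).mp ?_
  intro A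
  rcases A.eq_empty_or_nonempty with rfl | hA
  · simp
  have hbi : A.biUnion t = ((A.biUnion (fun v => G.neighborFinset v)).image Sum.inl) ∪
      (Finset.univ : Finset (Fin d)).image Sum.inr := by
    ext x
    simp only [Finset.mem_biUnion, ht, Finset.mem_union, Finset.mem_image]
    constructor
    · rintro ⟨v, hv, h | h⟩
      · obtain ⟨u, hu, rfl⟩ := h
        exact Or.inl ⟨u, ⟨v, hv, hu⟩, rfl⟩
      · exact Or.inr h
    · rintro (⟨u, hu, rfl⟩ | h)
      · obtain ⟨v, hv, hu'⟩ := hu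
        exact ⟨v, hv, Or.inl ⟨u, hu', rfl⟩⟩
      · obtain ⟨v, hv⟩ := hA
        exact ⟨v, hv, Or.inr h⟩
  rw [hbi, Finset.card_union_of_disjoint, Finset.card_image_of_injective _ Sum.inl_injective,
    Finset.card_image_of_injective _ Sum.inr_injective, Finset.card_univ, Fintype.card_fin]
  · have := hd A
    omega
  · simp only [Finset.disjoint_left, Finset.mem_image]
    rintro x ⟨u, -, rfl⟩ ⟨j, -, h⟩
    exact Sum.inl_ne_inr h.symm

set_option linter.unusedSectionVars false in
private lemma sum_card_filter_eq (W : Finset V) (M : V → V) (s : Finset (Sym2 V)) :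
    ∑ e ∈ s, (#(W.filter fun v => s(v, M v) = e) : ℝ)
      = #(W.filter fun v => s(v, M v) ∈ s) := by
  have h1 : ∀ e, (#(W.filter fun v => s(v, M v) = e) : ℝ)
      = ∑ v ∈ W, if s(v, M v) = e then (1:ℝ) else 0 := by
    intro e
    exact (Finset.sum_boole _ _).symm
  simp_rw [h1]
  rw [Finset.sum_comm]
  have h2 : (#(W.filter fun v => s(v, M v) ∈ s) : ℝ)
      = ∑ v ∈ W, if s(v, M v) ∈ s then (1:ℝ) else 0 := by
    exact (Finset.sum_boole _ _).symm
  rw [h2]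
  refine Finset.sum_congr rfl fun v _ => ?_
  exact Finset.sum_ite_eq s (s(v, M v)) (fun _ => (1:ℝ))

/-- Construct a fractional matching of total weight at least `(n - d) / 2`
from a Hall-type injection. -/
private lemma exists_from_injection (d : ℕ) (g : V → V ⊕ Fin d)
    (hginj : Function.Injective g)
    (hgt : ∀ v, g v ∈ (G.neighborFinset v).image Sum.inl ∪
        (Finset.univ : Finset (Fin d)).image Sum.inr) :
    ∃ f : Sym2 V → ℝ, IsFracMatching G f ∧
      (Fintype.card V : ℝ) - d ≤ 2 * ∑ e ∈ G.edgeFinset, f e := by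
  classical
  set W : Finset V := Finset.univ.filter (fun v => (g v).isLeft) with hWdef
  set M : V → V := fun v => Sum.elim id (fun _ => v) (g v) with hMdef
  have hWM : ∀ v ∈ W, G.Adj v (M v) ∧ g v = Sum.inl (M v) := by
    intro v hv
    rw [hWdef, Finset.mem_filter] at hv
    obtain ⟨u, hgv⟩ : ∃ u, g v = Sum.inl u := by
      cases h : g v with
      | inl u => exact ⟨u, rfl⟩
      | inr j => rw [h] at hv; simp at hv
    have hM : M v = u := by rw [hMdef]; simp [hgv]
    have hmem := hgt v
    rw [hgv] at hmem
    simp only [Finset.mem_union, Finset.mem_image] at hmem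
    rcases hmem with ⟨u', hu', h⟩ | ⟨j, -, h⟩
    · have huu : u' = u := Sum.inl_injective h
      rw [huu] at hu'
      exact ⟨hM ▸ (G.mem_neighborFinset v u).mp hu', by rw [hgv, hM]⟩
    · exact absurd h Sum.inr_ne_inl
  have hMinj : ∀ u₁ ∈ W, ∀ u₂ ∈ W, M u₁ = M u₂ → u₁ = u₂ := by
    intro u₁ h₁ u₂ h₂ h
    apply hginj
    rw [(hWM u₁ h₁).2, (hWM u₂ h₂).2, h]
  have hWcard : (Fintype.card V : ℝ) - d ≤ #W := by
    have hsplit : #W + #(Finset.univ.filter (fun v => ¬ (g v).isLeft)) = Fintype.card V := by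
      rw [hWdef, Finset.card_filter_add_card_filter_not]
      exact Finset.card_univ
    have hle : #(Finset.univ.filter (fun v => ¬ (g v).isLeft))
        ≤ #((Finset.univ : Finset (Fin d)).image Sum.inr : Finset (V ⊕ Fin d)) := by
      apply Finset.card_le_card_of_injOn g
      · intro v hv
        rw [Finset.mem_coe, Finset.mem_filter] at hv
        rcases hgv : g v with u | j
        · exact absurd (by rw [hgv]; rfl) hv.2
        · exact Finset.mem_image.mpr ⟨j, Finset.mem_univ _, rfl⟩
      · exact fun a _ b _ h => hginj h
    rw [Finset.card_image_of_injective _ Sum.inr_injective, Finset.card_univ,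
      Fintype.card_fin] at hle
    have : (Fintype.card V : ℝ) ≤ #W + d := by
      exact_mod_cast le_trans (le_of_eq hsplit.symm) (by omega)
    linarith
  refine ⟨fun e => (#(W.filter fun v => s(v, M v) = e) : ℝ) / 2, ⟨?_, ?_, ?_⟩, ?_⟩
  · intro e he
    constructor
    · positivity
    · have hsub : (W.filter fun v => s(v, M v) = e) ⊆ Finset.univ.filter (· ∈ e) := by
        intro v hv
        rw [Finset.mem_filter] at hv ⊢
        exact ⟨Finset.mem_univ _, hv.2 ▸ Sym2.mem_mk_left v (M v)⟩
      have := Finset.card_le_card hsub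
      rw [card_filter_mem_edge G he] at this
      have : (#(W.filter fun v => s(v, M v) = e) : ℝ) ≤ 2 := by exact_mod_cast this
      linarith
  · intro e he
    have : (W.filter fun v => s(v, M v) = e) = ∅ := by
      refine Finset.filter_eq_empty_iff.mpr fun v hv h => ?_
      apply he
      rw [← h, mem_edgeFinset]
      exact (hWM v hv).1
    simp only [this, Finset.card_empty, Nat.cast_zero, zero_div]
  · intro v
    rw [← Finset.sum_div, sum_card_filter_eq]
    have hsub : (W.filter fun u => s(u, M u) ∈ G.incidenceFinset v)
        ⊆ insert v (W.filter fun u => M u = v) := by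
      intro u hu
      rw [Finset.mem_filter, mem_incidenceFinset] at hu
      have hv' : v ∈ s(u, M u) := hu.2.2
      rcases Sym2.mem_iff.mp hv' with h | h
      · exact Finset.mem_insert.mpr (Or.inl h.symm)
      · exact Finset.mem_insert.mpr (Or.inr (Finset.mem_filter.mpr ⟨hu.1, h.symm⟩))
    have hone : #(W.filter fun u => M u = v) ≤ 1 := by
      refine Finset.card_le_one.mpr fun a ha b hb => ?_
      rw [Finset.mem_filter] at ha hb
      exact hMinj a ha.1 b hb.1 (ha.2.trans hb.2.symm)
    have h2 : #(W.filter fun u => s(u, M u) ∈ G.incidenceFinset v) ≤ 2 := by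
      calc #(W.filter fun u => s(u, M u) ∈ G.incidenceFinset v)
          ≤ #(insert v (W.filter fun u => M u = v)) := Finset.card_le_card hsub
        _ ≤ #(W.filter fun u => M u = v) + 1 := Finset.card_insert_le _ _
        _ ≤ 2 := by omega
    have : (#(W.filter fun u => s(u, M u) ∈ G.incidenceFinset v) : ℝ) ≤ 2 := by
      exact_mod_cast h2
    linarith
  · rw [← Finset.sum_div, sum_card_filter_eq]
    have : (W.filter fun v => s(v, M v) ∈ G.edgeFinset) = W := by
      refine Finset.filter_true_of_mem fun v hv => ?_
      rw [mem_edgeFinset]; exact (hWM v hv).1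
    rw [this]
    linarith

end Aux

/-- `α*'(G) = (n - max_{S ⊆ V} (i(G-S) - |S|)) / 2`. -/
theorem fracMatchNum_eq {V : Type*} [Fintype V] [DecidableEq V]
    (G : SimpleGraph V) [DecidableRel G.Adj] :
    fracMatchNum G = ((Fintype.card V : ℝ) -
      ((Finset.univ : Finset (Finset V)).sup' ⟨∅, Finset.mem_univ ∅⟩
        (fun S => (isoCount G S : ℤ) - S.card) : ℤ)) / 2 := by
  classical
  set D : ℤ := (Finset.univ : Finset (Finset V)).sup' ⟨∅, Finset.mem_univ ∅⟩
    (fun S => (isoCount G S : ℤ) - S.card) with hDdef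
  have hDle : ∀ S : Finset V, (isoCount G S : ℤ) - #S ≤ D := fun S =>
    Finset.le_sup' (f := fun S => (isoCount G S : ℤ) - #S) (Finset.mem_univ S)
  have hD0 : 0 ≤ D := by
    have h := hDle ∅
    simp only [Finset.card_empty, Nat.cast_zero, sub_zero] at h
    exact le_trans (Int.natCast_nonneg _) h
  obtain ⟨S₀, -, hS₀⟩ := Finset.exists_mem_eq_sup'
    (⟨∅, Finset.mem_univ ∅⟩ : (Finset.univ : Finset (Finset V)).Nonempty)
    (fun S => (isoCount G S : ℤ) - S.card)
  set d := D.toNat with hddef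
  have hdD : (d : ℤ) = D := Int.toNat_of_nonneg hD0
  have hd' : ∀ X : Finset V,
      (#X : ℤ) - #(X.biUnion (fun v => G.neighborFinset v)) ≤ (d : ℤ) := by
    intro X
    rw [hdD]
    exact le_trans (defect_le G X) (hDle _)
  obtain ⟨g, hginj, hgt⟩ := exists_injection G d hd'
  obtain ⟨fm, hfm, hfmtot⟩ := exists_from_injection G d g hginj hgt
  have hub : ∀ x ∈ {x : ℝ | ∃ f, IsFracMatching G f ∧ x = ∑ e ∈ G.edgeFinset, f e},
      x ≤ ((Fintype.card V : ℝ) - (D : ℝ)) / 2 := by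
    rintro x ⟨f, hf, rfl⟩
    have h := frac_le G hf S₀
    have hcast : (D : ℝ) = (isoCount G S₀ : ℝ) - (#S₀ : ℝ) := by
      have : ((D : ℤ) : ℝ) = (((isoCount G S₀ : ℤ) - #S₀ : ℤ) : ℝ) := by
        rw [← hDdef] at hS₀
        exact_mod_cast congrArg (fun z : ℤ => (z : ℝ)) hS₀
      push_cast at this
      exact this
    linarith
  have hmem : (∑ e ∈ G.edgeFinset, fm e)
      ∈ {x : ℝ | ∃ f, IsFracMatching G f ∧ x = ∑ e ∈ G.edgeFinset, f e} :=
    ⟨fm, hfm, rfl⟩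
  have hbdd : BddAbove {x : ℝ | ∃ f, IsFracMatching G f ∧ x = ∑ e ∈ G.edgeFinset, f e} :=
    ⟨_, hub⟩
  have h1 : fracMatchNum G ≤ ((Fintype.card V : ℝ) - (D : ℝ)) / 2 := by
    rw [fracMatchNum]
    exact csSup_le ⟨_, hmem⟩ hub
  have h2 : ((Fintype.card V : ℝ) - (D : ℝ)) / 2 ≤ fracMatchNum G := by
    have hle := le_csSup hbdd hmem
    rw [← fracMatchNum] at hle
    have hdr : (d : ℝ) = (D : ℝ) := by exact_mod_cast hdD
    have : ((Fintype.card V : ℝ) - (D : ℝ)) / 2 ≤ ∑ e ∈ G.edgeFinset, fm e := by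
      rw [← hdr]
      linarith
    linarith
  linarith
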